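/- arXiv:2507.19215 — 2 statements merged into one kernel-verified Lean document; each statement's English description precedes it below -/
import Mathlib

section
/- Let X be a Polish space with metric d, let μ, ν be Borel probability measures on X, and let φ : X → [0,∞) be Borel measurable. Then the weighted total variation satisfies TV_φ(μ, ν) := ∫_X φ(x) |μ − ν|(dx) ≤ (1 + log ∫_X e^{φ(x)²} μ(dx))^{1/2} · √(2 H(ν | μ)). -/
open MeasureTheory ProbabilityTheory MeasurableSpace
open scoped Classical
open scoped ENNReal

noncomputable section

lemma probToFin {α : Type*} [MeasurableSpace α] {μ : Measure α}
    (h : IsProbabilityMeasure μ) : IsFiniteMeasure μ := by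
  haveI := h; infer_instance

/-- Relative entropy `H(ν | μ) = ∫ log (dν/dμ) dν` if `ν ≪ μ` (with value `∞` if the
integral is not finite), and `H(ν | μ) = ∞` otherwise. -/
def relEntropy {α : Type*} [MeasurableSpace α] (ν μ : Measure α) : ℝ≥0∞ :=
  if ν ≪ μ ∧ Integrable (fun x => Real.log (ν.rnDeriv μ x).toReal) ν
  then ENNReal.ofReal (∫ x, Real.log (ν.rnDeriv μ x).toReal ∂ν)
  else ∞

/-- Extended logarithm on `ℝ≥0∞` (used only on arguments `≥ 1`). -/
def elog (x : ℝ≥0∞) : ℝ≥0∞ :=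
  if x = ∞ then ∞ else ENNReal.ofReal (Real.log x.toReal)

/-- Total variation measure `|μ - ν|` of the signed measure `μ - ν`. -/
def tvMeasure {α : Type*} [MeasurableSpace α] (μ ν : Measure α)
    [IsFiniteMeasure μ] [IsFiniteMeasure ν] : Measure α :=
  (μ.toSignedMeasure - ν.toSignedMeasure).totalVariation

/-- `π` is a coupling of `μ` and `ν`. -/
def IsCoupling {α : Type*} [MeasurableSpace α] (μ ν : Measure α)
    (π : Measure (α × α)) : Prop :=
  π.map Prod.fst = μ ∧ π.map Prod.snd = ν

namespace BV

open MeasureTheory Real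

variable {α : Type*} {mα : MeasurableSpace α}

lemma one_sub_inv_le_log {x : ℝ} (hx : 0 < x) : 1 - x⁻¹ ≤ Real.log x := by
  have h := Real.log_le_sub_one_of_pos (x := x⁻¹) (by positivity)
  rw [Real.log_inv] at h; linarith

def hent (s : ℝ) : ℝ := s * Real.log s - s + 1

def kfun (s : ℝ) : ℝ := (s + 1) * Real.log s - 2 * (s - 1)

def h1fun (s : ℝ) : ℝ := (2 * s + 4) * hent s - 3 * (s - 1) ^ 2

lemma hasDerivAt_kfun {s : ℝ} (hs : 0 < s) :
    HasDerivAt kfun (Real.log s + s⁻¹ - 1) s := by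
  have h1 : HasDerivAt (fun s : ℝ => (s + 1) * Real.log s)
      (1 * Real.log s + (s + 1) * s⁻¹) s :=
    (((hasDerivAt_id s).add_const 1)).mul (Real.hasDerivAt_log hs.ne')
  have h2 : HasDerivAt (fun s : ℝ => 2 * (s - 1)) 2 s := by
    simpa using ((hasDerivAt_id s).sub_const 1).const_mul 2
  have := h1.sub h2
  refine this.congr_deriv ?_
  rw [add_mul, mul_inv_cancel₀ hs.ne']
  ring

lemma hasDerivAt_h1fun {s : ℝ} (hs : 0 < s) :
    HasDerivAt h1fun (4 * kfun s) s := by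
  have hlog : HasDerivAt Real.log s⁻¹ s := Real.hasDerivAt_log hs.ne'
  have hh : HasDerivAt hent (Real.log s) s := by
    have h1 : HasDerivAt (fun s : ℝ => s * Real.log s) (1 * Real.log s + s * s⁻¹) s :=
      (hasDerivAt_id s).mul hlog
    have h2 : HasDerivAt hent (1 * Real.log s + s * s⁻¹ - 1) s := by
      unfold hent
      exact (h1.sub (hasDerivAt_id s)).add_const 1
    convert h2 using 1
    field_simp
    ring
  have hA : HasDerivAt (fun s : ℝ => (2 * s + 4) * hent s)
      (2 * hent s + (2 * s + 4) * Real.log s) s := by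
    have h3 : HasDerivAt (fun s : ℝ => 2 * s + 4) 2 s := by
      simpa using ((hasDerivAt_id s).const_mul 2).add_const 4
    exact h3.mul hh
  have hB : HasDerivAt (fun s : ℝ => 3 * (s - 1) ^ 2) (3 * (2 * (s - 1))) s := by
    have := (((hasDerivAt_id s).sub_const 1).pow 2).const_mul 3
    simpa using this
  have := hA.sub hB
  refine this.congr_deriv ?_
  unfold kfun hent
  ring

lemma kfun_mono : MonotoneOn kfun (Set.Ioi (0 : ℝ)) := by
  have h : ∀ x ∈ interior (Set.Ioi (0 : ℝ)), 0 ≤ deriv kfun x := by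
    intro x hx
    rw [interior_Ioi] at hx
    rw [(hasDerivAt_kfun hx).deriv]
    have := one_sub_inv_le_log hx
    linarith
  refine monotoneOn_of_deriv_nonneg (convex_Ioi 0) ?_ ?_ h
  · intro x hx
    exact (hasDerivAt_kfun hx).continuousAt.continuousWithinAt
  · intro x hx
    rw [interior_Ioi] at hx
    exact (hasDerivAt_kfun hx).differentiableAt.differentiableWithinAt

lemma kfun_one : kfun 1 = 0 := by simp [kfun]

lemma h1fun_one : h1fun 1 = 0 := by simp [h1fun, hent]

lemma h1fun_nonneg {s : ℝ} (hs : 0 ≤ s) : 0 ≤ h1fun s := by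
  rcases eq_or_lt_of_le hs with h | hpos
  · simp [h1fun, ← h, hent]; norm_num
  rcases le_or_gt 1 s with h1 | h1
  · -- monotone on Ici 1
    have hmono : MonotoneOn h1fun (Set.Ici (1 : ℝ)) := by
      refine monotoneOn_of_deriv_nonneg (convex_Ici 1) ?_ ?_ ?_
      · intro x hx
        exact (hasDerivAt_h1fun (lt_of_lt_of_le one_pos hx)).continuousAt.continuousWithinAt
      · intro x hx
        rw [interior_Ici] at hx
        exact (hasDerivAt_h1fun (lt_trans one_pos hx)).differentiableAt.differentiableWithinAt
      · intro x hx
        rw [interior_Ici] at hx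
        rw [(hasDerivAt_h1fun (lt_trans one_pos hx)).deriv]
        have : kfun 1 ≤ kfun x :=
          kfun_mono (Set.mem_Ioi.2 one_pos) (Set.mem_Ioi.2 (lt_trans one_pos hx)) hx.le
        rw [kfun_one] at this
        linarith
    have := hmono (Set.mem_Ici.2 le_rfl) (Set.mem_Ici.2 h1) h1
    rwa [h1fun_one] at this
  · -- antitone on Ioc 0 1
    have hanti : AntitoneOn h1fun (Set.Ioc (0 : ℝ) 1) := by
      refine antitoneOn_of_deriv_nonpos (convex_Ioc 0 1) ?_ ?_ ?_
      · intro x hx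
        exact (hasDerivAt_h1fun hx.1).continuousAt.continuousWithinAt
      · intro x hx
        rw [interior_Ioc] at hx
        exact (hasDerivAt_h1fun hx.1).differentiableAt.differentiableWithinAt
      · intro x hx
        rw [interior_Ioc] at hx
        rw [(hasDerivAt_h1fun hx.1).deriv]
        have : kfun x ≤ kfun 1 :=
          kfun_mono (Set.mem_Ioi.2 hx.1) (Set.mem_Ioi.2 one_pos) hx.2.le
        rw [kfun_one] at this
        linarith
    have := hanti (Set.mem_Ioc.2 ⟨hpos, h1.le⟩) (Set.mem_Ioc.2 ⟨one_pos, le_rfl⟩) h1.le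
    rwa [h1fun_one] at this

lemma pinsker_pointwise {s : ℝ} (hs : 0 ≤ s) :
    3 * (s - 1) ^ 2 ≤ (2 * s + 4) * hent s := by
  have := h1fun_nonneg hs
  unfold h1fun at this
  linarith


lemma hent_nonneg {s : ℝ} (hs : 0 ≤ s) : 0 ≤ hent s := by
  rcases eq_or_lt_of_le hs with h | h
  · simp [hent, ← h]
  · have h1 := one_sub_inv_le_log h
    have : s * (1 - s⁻¹) ≤ s * Real.log s := by
      exact mul_le_mul_of_nonneg_left h1 hs
    have hs' : s * s⁻¹ = 1 := mul_inv_cancel₀ h.ne'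
    unfold hent
    nlinarith

lemma young_ineq (s t : ℝ) (hs : 0 ≤ s) : s * t ≤ hent s + (Real.exp t - 1) := by
  rcases eq_or_lt_of_le hs with h | h
  · simp [hent, ← h]
    positivity
  · have key : Real.exp t = s * Real.exp (t - Real.log s) := by
      rw [Real.exp_sub, Real.exp_log h]
      field_simp
    have h2 : t - Real.log s + 1 ≤ Real.exp (t - Real.log s) := Real.add_one_le_exp _
    have h3 : s * (t - Real.log s + 1) ≤ s * Real.exp (t - Real.log s) :=
      mul_le_mul_of_nonneg_left h2 hs
    unfold hent
    nlinarith


lemma integral_llr_nonneg (ν ρ : Measure α) [IsProbabilityMeasure ν] [IsProbabilityMeasure ρ]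
    (hνρ : ν ≪ ρ) (h_int : Integrable (llr ν ρ) ν) : 0 ≤ ∫ x, llr ν ρ x ∂ν := by
  set u : α → ℝ := fun x => ((ν.rnDeriv ρ x).toReal)⁻¹ with hu_def
  have hu_meas : Measurable u := (Measure.measurable_rnDeriv ν ρ).ennreal_toReal.inv
  have hu_nonneg : 0 ≤ᵐ[ν] u := Filter.Eventually.of_forall fun x => by positivity
  -- lintegral bound
  have hlint : ∫⁻ x, ENNReal.ofReal (u x) ∂ν ≤ 1 := by
    have h1 : ∫⁻ x, ν.rnDeriv ρ x * ENNReal.ofReal (u x) ∂ρ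
        = ∫⁻ x, ENNReal.ofReal (u x) ∂ν :=
      lintegral_rnDeriv_mul hνρ (hu_meas.ennreal_ofReal.aemeasurable)
    rw [← h1]
    calc ∫⁻ x, ν.rnDeriv ρ x * ENNReal.ofReal (u x) ∂ρ
        ≤ ∫⁻ _, 1 ∂ρ := by
          refine lintegral_mono_ae ?_
          filter_upwards [Measure.rnDeriv_lt_top ν ρ] with x hx
          rcases eq_or_ne (ν.rnDeriv ρ x) 0 with h0 | h0
          · simp [h0]
          · have htr : 0 < (ν.rnDeriv ρ x).toReal := ENNReal.toReal_pos h0 hx.ne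
            have : ENNReal.ofReal (u x) = (ν.rnDeriv ρ x)⁻¹ := by
              simp only [hu_def]
              rw [ENNReal.ofReal_inv_of_pos htr, ENNReal.ofReal_toReal hx.ne]
            rw [this, ENNReal.mul_inv_cancel h0 hx.ne]
      _ = 1 := by simp
  have hu_int : Integrable u ν := by
    refine ⟨hu_meas.aestronglyMeasurable, ?_⟩
    rw [hasFiniteIntegral_iff_ofReal hu_nonneg]
    exact lt_of_le_of_lt hlint ENNReal.one_lt_top
  have hint_u : ∫ x, u x ∂ν ≤ 1 := by
    rw [integral_eq_lintegral_of_nonneg_ae hu_nonneg hu_meas.aestronglyMeasurable]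
    calc (∫⁻ x, ENNReal.ofReal (u x) ∂ν).toReal ≤ (1 : ℝ≥0∞).toReal :=
          ENNReal.toReal_mono (by simp) hlint
      _ = 1 := by simp
  have h_le : ∀ᵐ x ∂ν, 1 - u x ≤ llr ν ρ x := by
    filter_upwards [Measure.rnDeriv_pos hνρ, hνρ.ae_le (Measure.rnDeriv_lt_top ν ρ)]
      with x hpos hlt
    have htr : 0 < (ν.rnDeriv ρ x).toReal := ENNReal.toReal_pos hpos.ne' hlt.ne
    exact one_sub_inv_le_log htr
  have hmono := integral_mono_ae ((integrable_const (1:ℝ)).sub hu_int) h_int h_le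
  simp only [Pi.sub_apply] at hmono
  have : ∫ x, (1 - u x) ∂ν = 1 - ∫ x, u x ∂ν := by
    rw [integral_sub (integrable_const 1) hu_int]
    simp
  rw [this] at hmono
  linarith

/-- Donsker–Varadhan inequality. -/
lemma dv (μ ν : Measure α) [IsProbabilityMeasure μ] [IsProbabilityMeasure ν]
    (hνμ : ν ≪ μ) (h_int : Integrable (llr ν μ) ν) (G : α → ℝ)
    (hG : Integrable G ν) (hexp : Integrable (fun x => Real.exp (G x)) μ) :
    ∫ x, G x ∂ν ≤ ∫ x, llr ν μ x ∂ν + Real.log (∫ x, Real.exp (G x) ∂μ) := by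
  have hρ : IsProbabilityMeasure (μ.tilted G) := isProbabilityMeasure_tilted hexp
  have hνρ : ν ≪ μ.tilted G := hνμ.trans (absolutelyContinuous_tilted hexp)
  have h_int' : Integrable (llr ν (μ.tilted G)) ν :=
    integrable_llr_tilted_right hνμ hG h_int hexp
  have h0 : 0 ≤ ∫ x, llr ν (μ.tilted G) x ∂ν := integral_llr_nonneg ν (μ.tilted G) hνρ h_int'
  rw [integral_llr_tilted_right hνμ hG hexp h_int] at h0
  linarith


lemma ennreal_key (a : ℝ≥0∞) : (1 - a) + a = (a - 1) + 1 := by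
  rcases le_total a 1 with h | h
  · rw [tsub_add_cancel_of_le h, tsub_eq_zero_of_le h, zero_add]
  · rw [tsub_eq_zero_of_le h, zero_add, tsub_add_cancel_of_le h]

lemma tv_eq (μ ν : Measure α) [IsProbabilityMeasure μ] [IsProbabilityMeasure ν]
    (hνμ : ν ≪ μ) :
    tvMeasure μ ν = μ.withDensity (fun x => 1 - ν.rnDeriv μ x)
      + μ.withDensity (fun x => ν.rnDeriv μ x - 1) := by
  set f := ν.rnDeriv μ with hf_def
  have hf_meas : Measurable f := Measure.measurable_rnDeriv ν μ
  set p := μ.withDensity (fun x => 1 - f x) with hp_def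
  set q := μ.withDensity (fun x => f x - 1) with hq_def
  have hν_eq : μ.withDensity f = ν := Measure.withDensity_rnDeriv_eq ν μ hνμ
  have hp_fin : IsFiniteMeasure p := by
    constructor
    rw [hp_def, withDensity_apply _ MeasurableSet.univ]
    calc ∫⁻ x in Set.univ, (1 - f x) ∂μ ≤ ∫⁻ _ in Set.univ, 1 ∂μ :=
          setLIntegral_mono measurable_const fun x _ => tsub_le_self.trans le_rfl
      _ = μ Set.univ := by simp
      _ < ⊤ := measure_lt_top μ _
  have hq_fin : IsFiniteMeasure q := by
    constructor
    rw [hq_def, withDensity_apply _ MeasurableSet.univ]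
    calc ∫⁻ x in Set.univ, (f x - 1) ∂μ ≤ ∫⁻ x in Set.univ, f x ∂μ :=
          setLIntegral_mono hf_meas fun x _ => tsub_le_self
      _ = (μ.withDensity f) Set.univ := (withDensity_apply _ MeasurableSet.univ).symm
      _ = ν Set.univ := by rw [hν_eq]
      _ < ⊤ := measure_lt_top ν _
  have hsing : p ⟂ₘ q := by
    refine ⟨f ⁻¹' Set.Ici 1, hf_meas measurableSet_Ici, ?_, ?_⟩
    · rw [hp_def, withDensity_apply _ (hf_meas measurableSet_Ici)]
      rw [setLIntegral_congr_fun (hf_meas measurableSet_Ici)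
        (fun x hx => tsub_eq_zero_of_le hx)]
      simp
    · rw [hq_def, withDensity_apply _ (hf_meas measurableSet_Ici).compl]
      rw [setLIntegral_congr_fun (hf_meas measurableSet_Ici).compl
        (fun x hx => tsub_eq_zero_of_le (le_of_not_ge hx))]
      simp
  haveI := hp_fin; haveI := hq_fin
  set j : JordanDecomposition α := ⟨p, q, hsing⟩ with hj_def
  have hkey : ∀ i : Set α, MeasurableSet i → p i + ν i = q i + μ i := by
    intro i hi
    rw [hp_def, hq_def, withDensity_apply _ hi, withDensity_apply _ hi,
      ← hν_eq, withDensity_apply _ hi, ← setLIntegral_one i]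
    rw [← lintegral_add_right _ hf_meas, ← lintegral_add_right _ measurable_const]
    exact lintegral_congr fun x => ennreal_key (f x)
  have hsm : μ.toSignedMeasure - ν.toSignedMeasure = j.toSignedMeasure := by
    refine VectorMeasure.ext fun i hi => ?_
    have hrhs : j.toSignedMeasure i = (p i).toReal - (q i).toReal := by
      rw [JordanDecomposition.toSignedMeasure, Measure.toSignedMeasure_sub_apply hi]
      rfl
    rw [VectorMeasure.sub_apply, Measure.toSignedMeasure_apply_measurable hi,
      Measure.toSignedMeasure_apply_measurable hi, hrhs]
    have h1 := hkey i hi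
    have h2 : (p i).toReal + (ν i).toReal = (q i).toReal + (μ i).toReal := by
      rw [← ENNReal.toReal_add (measure_ne_top p i) (measure_ne_top ν i),
        ← ENNReal.toReal_add (measure_ne_top q i) (measure_ne_top μ i), h1]
    simp only [measureReal_def]
    linarith
  have hjord : (μ.toSignedMeasure - ν.toSignedMeasure).toJordanDecomposition = j :=
    SignedMeasure.toJordanDecomposition_eq hsm
  rw [tvMeasure, SignedMeasure.totalVariation, hjord]


lemma ofReal_half_rpow {a : ℝ} (ha : 0 ≤ a) :
    (ENNReal.ofReal a) ^ (1/2 : ℝ) = ENNReal.ofReal (Real.sqrt a) := by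
  rw [ENNReal.ofReal_rpow_of_nonneg ha (by norm_num), Real.sqrt_eq_rpow]

lemma ofReal_sq_rpow {a : ℝ} (ha : 0 ≤ a) :
    (ENNReal.ofReal a) ^ (2 : ℝ) = ENNReal.ofReal (a ^ 2) := by
  rw [ENNReal.ofReal_rpow_of_nonneg ha (by norm_num)]
  norm_num [Real.rpow_natCast]

lemma self_le_exp {x : ℝ} : x ≤ Real.exp x := by
  have := Real.add_one_le_exp x; linarith

set_option maxHeartbeats 2000000 in
/-- The key quantitative lemma. -/
theorem key (μ ν : Measure α) [IsProbabilityMeasure μ] [IsProbabilityMeasure ν]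
    (hνμ : ν ≪ μ) (h_int : Integrable (llr ν μ) ν)
    (ψ : α → ℝ) (hψm : Measurable ψ) (hψ0 : ∀ x, 0 ≤ ψ x)
    (hM : ∫⁻ x, ENNReal.ofReal (Real.exp (ψ x ^ 2)) ∂μ ≠ ∞) :
    ∫⁻ x, ENNReal.ofReal (ψ x) ∂(tvMeasure μ ν)
      ≤ ENNReal.ofReal (Real.sqrt (2 * (1 + Real.log
          ((∫⁻ x, ENNReal.ofReal (Real.exp (ψ x ^ 2)) ∂μ)).toReal) * ∫ x, llr ν μ x ∂ν)) := by
  classical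
  set f := ν.rnDeriv μ with hf_def
  have hf_meas : Measurable f := Measure.measurable_rnDeriv ν μ
  set F : α → ℝ := fun x => (f x).toReal with hF_def
  have hF_meas : Measurable F := hf_meas.ennreal_toReal
  have hF0 : ∀ x, 0 ≤ F x := fun x => ENNReal.toReal_nonneg
  set H := ∫ x, llr ν μ x ∂ν with hH_def
  have hH0 : 0 ≤ H := integral_llr_nonneg ν μ hνμ h_int
  -- the exponential moment
  have hexp_meas : Measurable fun x => Real.exp (ψ x ^ 2) := (hψm.pow_const 2).exp
  have hexp_nonneg : ∀ x, (0:ℝ) ≤ Real.exp (ψ x ^ 2) := fun x => (Real.exp_pos _).le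
  have hexp_int : Integrable (fun x => Real.exp (ψ x ^ 2)) μ := by
    refine ⟨hexp_meas.aestronglyMeasurable, ?_⟩
    rw [hasFiniteIntegral_iff_ofReal (Filter.Eventually.of_forall hexp_nonneg)]
    exact hM.lt_top
  set Mreal := ∫ x, Real.exp (ψ x ^ 2) ∂μ with hMreal_def
  have hMr : (∫⁻ x, ENNReal.ofReal (Real.exp (ψ x ^ 2)) ∂μ).toReal = Mreal := by
    rw [← ofReal_integral_eq_lintegral_ofReal hexp_int
      (Filter.Eventually.of_forall hexp_nonneg),
      ENNReal.toReal_ofReal (integral_nonneg hexp_nonneg)]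
  set L := Real.log Mreal with hL_def
  have hMreal_one : 1 ≤ Mreal := by
    calc (1:ℝ) = ∫ _, (1:ℝ) ∂μ := by simp
    _ ≤ Mreal := by
        refine integral_mono (integrable_const 1) hexp_int fun x => ?_
        exact Real.one_le_exp (sq_nonneg _)
  have hL0 : 0 ≤ L := Real.log_nonneg hMreal_one
  rw [hMr]
  -- integrability facts
  have hψ2_meas : Measurable fun x => ψ x ^ 2 := hψm.pow_const 2
  have hψ2_int_μ : Integrable (fun x => ψ x ^ 2) μ := by
    refine Integrable.mono' hexp_int hψ2_meas.aestronglyMeasurable ?_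
    refine Filter.Eventually.of_forall fun x => ?_
    rw [Real.norm_eq_abs, abs_of_nonneg (sq_nonneg _)]
    exact self_le_exp
  have hψ_int_μ : Integrable ψ μ := by
    refine Integrable.mono' hexp_int hψm.aestronglyMeasurable ?_
    refine Filter.Eventually.of_forall fun x => ?_
    rw [Real.norm_eq_abs, abs_of_nonneg (hψ0 x)]
    calc ψ x ≤ ψ x ^ 2 + 1 := by nlinarith [sq_nonneg (ψ x - 1)]
    _ ≤ Real.exp (ψ x ^ 2) := by have := Real.add_one_le_exp (ψ x ^ 2); linarith
  have hFllr_int : Integrable (fun x => F x * Real.log (F x)) μ := by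
    have h := (integrable_rnDeriv_smul_iff (E := ℝ) hνμ).mpr h_int
    simpa [smul_eq_mul, llr] using h
  have hF_int : Integrable F μ := Measure.integrable_toReal_rnDeriv
  have hhent_int : Integrable (fun x => hent (F x)) μ :=
    (hFllr_int.sub hF_int).add (integrable_const 1)
  have hF_integral : ∫ x, F x ∂μ = 1 := by
    rw [hF_def, hf_def, Measure.integral_toReal_rnDeriv hνμ]
    simp
  have hFlogF_integral : ∫ x, F x * Real.log (F x) ∂μ = H := by
    have h := integral_rnDeriv_smul (E := ℝ) hνμ (f := llr ν μ)
    simp [smul_eq_mul, llr] at h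
    exact h
  have hint_hent : ∫ x, hent (F x) ∂μ = H := by
    calc ∫ x, hent (F x) ∂μ
        = ∫ x, (F x * Real.log (F x) - F x + 1) ∂μ := rfl
      _ = (∫ x, (F x * Real.log (F x) - F x) ∂μ) + ∫ _, (1:ℝ) ∂μ :=
          integral_add (hFllr_int.sub hF_int) (integrable_const 1)
      _ = (∫ x, F x * Real.log (F x) ∂μ) - (∫ x, F x ∂μ) + 1 := by
          rw [integral_sub hFllr_int hF_int]; simp
      _ = H := by rw [hFlogF_integral, hF_integral]; ring
  have hhent_nonneg : ∀ x, 0 ≤ hent (F x) := fun x => hent_nonneg (hF0 x)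
  have hhent_lint : ∫⁻ x, ENNReal.ofReal (hent (F x)) ∂μ = ENNReal.ofReal H := by
    rw [← ofReal_integral_eq_lintegral_ofReal hhent_int
      (Filter.Eventually.of_forall hhent_nonneg), hint_hent]
  -- ψ² is ν-integrable
  have hψ2_lint_ν : ∫⁻ x, ENNReal.ofReal (ψ x ^ 2) ∂ν ≠ ∞ := by
    rw [← lintegral_rnDeriv_mul hνμ hψ2_meas.ennreal_ofReal.aemeasurable]
    have hb : ∫⁻ x, ν.rnDeriv μ x * ENNReal.ofReal (ψ x ^ 2) ∂μ
        ≤ ∫⁻ x, (ENNReal.ofReal (hent (F x)) + ENNReal.ofReal (Real.exp (ψ x ^ 2))) ∂μ := by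
      refine lintegral_mono_ae ?_
      filter_upwards [Measure.rnDeriv_lt_top ν μ] with x hx
      have hfx : ν.rnDeriv μ x = ENNReal.ofReal (F x) := (ENNReal.ofReal_toReal hx.ne).symm
      rw [hfx, ← ENNReal.ofReal_mul (hF0 x)]
      calc ENNReal.ofReal (F x * ψ x ^ 2)
          ≤ ENNReal.ofReal (hent (F x) + (Real.exp (ψ x ^ 2) - 1)) :=
            ENNReal.ofReal_le_ofReal (young_ineq (F x) (ψ x ^ 2) (hF0 x))
        _ ≤ ENNReal.ofReal (hent (F x)) + ENNReal.ofReal (Real.exp (ψ x ^ 2) - 1) :=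
            ENNReal.ofReal_add_le
        _ ≤ ENNReal.ofReal (hent (F x)) + ENNReal.ofReal (Real.exp (ψ x ^ 2)) := by
            gcongr
            linarith
    refine (lt_of_le_of_lt hb ?_).ne
    have hhentF_meas : Measurable (fun x => hent (F x)) :=
      ((hF_meas.mul (Real.measurable_log.comp hF_meas)).sub hF_meas).add_const 1
    rw [lintegral_add_left hhentF_meas.ennreal_ofReal, hhent_lint]
    exact ENNReal.add_lt_top.mpr ⟨ENNReal.ofReal_lt_top, hM.lt_top⟩
  have hψ2_int_ν : Integrable (fun x => ψ x ^ 2) ν := by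
    refine ⟨hψ2_meas.aestronglyMeasurable, ?_⟩
    rw [hasFiniteIntegral_iff_ofReal (Filter.Eventually.of_forall fun x => sq_nonneg _)]
    exact hψ2_lint_ν.lt_top
  have hψ_int_ν : Integrable ψ ν := by
    refine Integrable.mono' (hψ2_int_ν.add (integrable_const 1))
      hψm.aestronglyMeasurable ?_
    refine Filter.Eventually.of_forall fun x => ?_
    rw [Real.norm_eq_abs, abs_of_nonneg (hψ0 x)]
    simp only [Pi.add_apply]
    nlinarith [sq_nonneg (ψ x - 1)]
  -- Donsker-Varadhan consequences
  have hDV2 : ∫ x, ψ x ^ 2 ∂ν ≤ H + L := by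
    have h := dv μ ν hνμ h_int (fun x => ψ x ^ 2) hψ2_int_ν hexp_int
    exact h
  have hllr_self0 : llr μ μ =ᵐ[μ] fun _ => 0 := by
    filter_upwards [Measure.rnDeriv_self μ] with x hx
    simp [llr, hx]
  have hllr_self_int : Integrable (llr μ μ) μ := (integrable_const (0:ℝ)).congr hllr_self0.symm
  have hllr_self : ∫ x, llr μ μ x ∂μ = 0 := by
    rw [integral_congr_ae hllr_self0]; simp
  have hJ2 : ∫ x, ψ x ^ 2 ∂μ ≤ L := by
    have h := dv μ μ Measure.AbsolutelyContinuous.rfl hllr_self_int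
      (fun x => ψ x ^ 2) hψ2_int_μ hexp_int
    rw [hllr_self] at h
    linarith
  -- rewrite the LHS
  have hLHS : ∫⁻ x, ENNReal.ofReal (ψ x) ∂(tvMeasure μ ν)
      = ∫⁻ x, ENNReal.ofReal (|F x - 1| * ψ x) ∂μ := by
    rw [tv_eq μ ν hνμ, lintegral_add_measure,
      lintegral_withDensity_eq_lintegral_mul μ
        (show Measurable (fun x => 1 - ν.rnDeriv μ x) from measurable_const.sub hf_meas)
        hψm.ennreal_ofReal,
      lintegral_withDensity_eq_lintegral_mul μ
        (show Measurable (fun x => ν.rnDeriv μ x - 1) from hf_meas.sub measurable_const)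
        hψm.ennreal_ofReal]
    simp only [Pi.mul_apply]
    rw [← lintegral_add_left (show Measurable (fun x => (1 - ν.rnDeriv μ x) * ENNReal.ofReal (ψ x))
      from (measurable_const.sub hf_meas).mul hψm.ennreal_ofReal)]
    refine lintegral_congr_ae ?_
    filter_upwards [Measure.rnDeriv_lt_top ν μ] with x hx
    have hfx : f x = ENNReal.ofReal (F x) := (ENNReal.ofReal_toReal hx.ne).symm
    have hF1 : ∀ h : f x ≤ 1, F x ≤ 1 := by
      intro h
      have := ENNReal.toReal_mono (by simp) h
      simpa using this
    rcases le_total (f x) 1 with h | h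
    · rw [tsub_eq_zero_of_le h, zero_mul, add_zero]
      have h1 : (1:ℝ≥0∞) - f x = ENNReal.ofReal (1 - F x) := by
        rw [ENNReal.ofReal_sub _ (hF0 x), ENNReal.ofReal_one, ← hfx]
      rw [h1, ← ENNReal.ofReal_mul (by linarith [hF1 h])]
      congr 1
      rw [abs_of_nonpos (by linarith [hF1 h])]
      ring
    · rw [tsub_eq_zero_of_le h, zero_mul, zero_add]
      have hF1' : 1 ≤ F x := by
        have := ENNReal.toReal_mono hx.ne h
        simpa using this
      have h1 : f x - 1 = ENNReal.ofReal (F x - 1) := by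
        rw [ENNReal.ofReal_sub _ (by norm_num), ENNReal.ofReal_one, ← hfx]
      rw [h1, ← ENNReal.ofReal_mul (by linarith)]
      congr 1
      rw [abs_of_nonneg (by linarith)]
  rw [hLHS]
  rcases le_or_gt H 2 with hsmall | hlarge
  · -- small entropy branch: weighted Pinsker via Cauchy-Schwarz
    set a : α → ℝ := fun x => (2 * F x + 4) / 3 with ha_def
    have ha_pos : ∀ x, 0 < a x := fun x => by
      have := hF0 x
      simp only [ha_def]
      positivity
    have ha_meas : Measurable a := ((hF_meas.const_mul 2).add_const 4).div_const 3
    set g1 : α → ℝ≥0∞ := fun x => ENNReal.ofReal (ψ x * Real.sqrt (a x)) with hg1_def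
    set g2 : α → ℝ≥0∞ := fun x => ENNReal.ofReal (|F x - 1| * Real.sqrt (a x)⁻¹)
      with hg2_def
    have hg1_meas : AEMeasurable g1 μ :=
      (hψm.mul (ha_meas.sqrt)).ennreal_ofReal.aemeasurable
    have hg2_meas : AEMeasurable g2 μ :=
      (((hF_meas.sub measurable_const).abs).mul (ha_meas.inv.sqrt)).ennreal_ofReal.aemeasurable
    have hsplit : ∀ x, ENNReal.ofReal (|F x - 1| * ψ x) = g1 x * g2 x := by
      intro x
      have hax := ha_pos x
      have hsq : Real.sqrt (a x) * Real.sqrt (a x)⁻¹ = 1 := by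
        rw [Real.sqrt_inv]
        exact mul_inv_cancel₀ (Real.sqrt_pos.mpr hax).ne'
      rw [hg1_def, hg2_def, ← ENNReal.ofReal_mul (mul_nonneg (hψ0 x) (Real.sqrt_nonneg _))]
      congr 1
      calc |F x - 1| * ψ x = ψ x * |F x - 1| * (Real.sqrt (a x) * Real.sqrt (a x)⁻¹) := by
            rw [hsq]; ring
        _ = ψ x * Real.sqrt (a x) * (|F x - 1| * Real.sqrt (a x)⁻¹) := by ring
    have hconj : Real.HolderConjugate 2 2 := ⟨by norm_num, by norm_num, by norm_num⟩
    have hholder := ENNReal.lintegral_mul_le_Lp_mul_Lq μ hconj hg1_meas hg2_meas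
    have hI : ∫⁻ x, ENNReal.ofReal (|F x - 1| * ψ x) ∂μ
        ≤ (∫⁻ x, g1 x ^ (2:ℝ) ∂μ) ^ (1/2 : ℝ) * (∫⁻ x, g2 x ^ (2:ℝ) ∂μ) ^ (1/2 : ℝ) := by
      calc ∫⁻ x, ENNReal.ofReal (|F x - 1| * ψ x) ∂μ = ∫⁻ x, (g1 * g2) x ∂μ := by
            refine lintegral_congr fun x => ?_
            rw [hsplit x]; rfl
        _ ≤ _ := hholder
    -- first factor
    have hg1sq : ∀ x, g1 x ^ (2:ℝ) = ENNReal.ofReal (ψ x ^ 2 * a x) := by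
      intro x
      rw [hg1_def, ofReal_sq_rpow (mul_nonneg (hψ0 x) (Real.sqrt_nonneg _)), mul_pow,
        Real.sq_sqrt (ha_pos x).le]
    have hψ2F_int : Integrable (fun x => F x * ψ x ^ 2) μ := by
      have h := (integrable_rnDeriv_smul_iff (E := ℝ) hνμ).mpr hψ2_int_ν
      simpa [smul_eq_mul] using h
    have hψ2a_int : Integrable (fun x => ψ x ^ 2 * a x) μ := by
      have : (fun x => ψ x ^ 2 * a x)
          = fun x => (2/3) * (F x * ψ x ^ 2) + (4/3) * ψ x ^ 2 := by
        funext x; simp only [ha_def]; ring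
      rw [this]
      exact ((hψ2F_int.const_mul _)).add (hψ2_int_μ.const_mul _)
    have hψ2F_integral : ∫ x, F x * ψ x ^ 2 ∂μ = ∫ x, ψ x ^ 2 ∂ν := by
      have h := integral_rnDeriv_smul (E := ℝ) hνμ (f := fun x => ψ x ^ 2)
      simpa [smul_eq_mul] using h
    have hfac1 : ∫⁻ x, g1 x ^ (2:ℝ) ∂μ ≤ ENNReal.ofReal (2 * (1 + L)) := by
      have heq : ∫⁻ x, g1 x ^ (2:ℝ) ∂μ = ENNReal.ofReal (∫ x, ψ x ^ 2 * a x ∂μ) := by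
        rw [lintegral_congr fun x => hg1sq x,
          ← ofReal_integral_eq_lintegral_ofReal hψ2a_int
            (Filter.Eventually.of_forall fun x => mul_nonneg (sq_nonneg _) (ha_pos x).le)]
      rw [heq]
      refine ENNReal.ofReal_le_ofReal ?_
      have hval : ∫ x, ψ x ^ 2 * a x ∂μ
          = (2/3) * (∫ x, F x * ψ x ^ 2 ∂μ) + (4/3) * ∫ x, ψ x ^ 2 ∂μ := by
        have : (fun x => ψ x ^ 2 * a x)
            = fun x => (2/3) * (F x * ψ x ^ 2) + (4/3) * ψ x ^ 2 := by
          funext x; simp only [ha_def]; ring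
        rw [this, integral_add ((hψ2F_int.const_mul _)) (hψ2_int_μ.const_mul _),
          integral_const_mul, integral_const_mul]
      rw [hval, hψ2F_integral]
      have h2 : ∫ x, ψ x ^ 2 ∂ν ≤ H + L := hDV2
      have h3 : ∫ x, ψ x ^ 2 ∂μ ≤ L := hJ2
      nlinarith [hH0, hL0]
    -- second factor
    have hg2sq : ∀ x, g2 x ^ (2:ℝ) ≤ ENNReal.ofReal (hent (F x)) := by
      intro x
      rw [hg2_def, ofReal_sq_rpow (mul_nonneg (abs_nonneg _) (Real.sqrt_nonneg _)), mul_pow,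
        Real.sq_sqrt (inv_nonneg.mpr (ha_pos x).le), sq_abs]
      refine ENNReal.ofReal_le_ofReal ?_
      have hp := pinsker_pointwise (hF0 x)
      have hax := ha_pos x
      rw [mul_inv_le_iff₀ hax]
      calc (F x - 1) ^ 2 = (3 * (F x - 1)^2) / 3 := by ring
        _ ≤ ((2 * F x + 4) * hent (F x)) / 3 := by linarith
        _ = hent (F x) * a x := by simp only [ha_def]; ring
    have hfac2 : ∫⁻ x, g2 x ^ (2:ℝ) ∂μ ≤ ENNReal.ofReal H := by
      rw [← hhent_lint]
      exact lintegral_mono fun x => hg2sq x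
    calc ∫⁻ x, ENNReal.ofReal (|F x - 1| * ψ x) ∂μ
        ≤ (∫⁻ x, g1 x ^ (2:ℝ) ∂μ) ^ (1/2 : ℝ) * (∫⁻ x, g2 x ^ (2:ℝ) ∂μ) ^ (1/2 : ℝ) := hI
      _ ≤ (ENNReal.ofReal (2 * (1 + L))) ^ (1/2 : ℝ) * (ENNReal.ofReal H) ^ (1/2 : ℝ) := by
          exact mul_le_mul' (ENNReal.rpow_le_rpow hfac1 (by norm_num))
            (ENNReal.rpow_le_rpow hfac2 (by norm_num))
      _ = ENNReal.ofReal (Real.sqrt (2 * (1 + L) * H)) := by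
          rw [ofReal_half_rpow (by nlinarith), ofReal_half_rpow hH0,
            ← ENNReal.ofReal_mul (Real.sqrt_nonneg _),
            ← Real.sqrt_mul (by nlinarith) H]
  · -- large entropy branch
    have hFψ_int : Integrable (fun x => F x * ψ x) μ := by
      have h := (integrable_rnDeriv_smul_iff (E := ℝ) hνμ).mpr hψ_int_ν
      simpa [smul_eq_mul] using h
    have hsum_int : Integrable (fun x => (F x + 1) * ψ x) μ := by
      have : (fun x => (F x + 1) * ψ x) = fun x => F x * ψ x + ψ x := by
        funext x; ring
      rw [this]
      exact hFψ_int.add hψ_int_μ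
    have hstep1 : ∫⁻ x, ENNReal.ofReal (|F x - 1| * ψ x) ∂μ
        ≤ ENNReal.ofReal (∫ x, (F x + 1) * ψ x ∂μ) := by
      rw [ofReal_integral_eq_lintegral_ofReal hsum_int
        (Filter.Eventually.of_forall fun x =>
          mul_nonneg (by linarith [hF0 x]) (hψ0 x))]
      refine lintegral_mono fun x => ENNReal.ofReal_le_ofReal ?_
      have : |F x - 1| ≤ F x + 1 := by
        rw [abs_le]
        constructor <;> nlinarith [hF0 x]
      exact mul_le_mul_of_nonneg_right this (hψ0 x)
    have hsum_val : ∫ x, (F x + 1) * ψ x ∂μ = (∫ x, ψ x ∂ν) + ∫ x, ψ x ∂μ := by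
      have h1 : (fun x => (F x + 1) * ψ x) = fun x => F x * ψ x + ψ x := by
        funext x; ring
      have h2 : ∫ x, F x * ψ x ∂μ = ∫ x, ψ x ∂ν := by
        have h := integral_rnDeriv_smul (E := ℝ) hνμ (f := ψ)
        simpa [smul_eq_mul] using h
      rw [h1, integral_add hFψ_int hψ_int_μ, h2]
    set lam := Real.sqrt (2 * (H + 2 * L)) with hlam_def
    have hlam_pos : 0 < lam := Real.sqrt_pos.mpr (by nlinarith)
    have hlam_sq : lam ^ 2 = 2 * (H + 2 * L) := Real.sq_sqrt (by nlinarith)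
    have hexp_lam_int : Integrable (fun x => Real.exp (lam * ψ x)) μ := by
      refine Integrable.mono' (hexp_int.const_mul (Real.exp (lam ^ 2 / 4)))
        ((hψm.const_mul lam).exp).aestronglyMeasurable ?_
      refine Filter.Eventually.of_forall fun x => ?_
      rw [Real.norm_eq_abs, abs_of_nonneg (Real.exp_pos _).le, ← Real.exp_add]
      refine Real.exp_le_exp.mpr ?_
      nlinarith [sq_nonneg (lam / 2 - ψ x)]
    have hlog_bound : Real.log (∫ x, Real.exp (lam * ψ x) ∂μ) ≤ lam ^ 2 / 4 + L := by
      have h1 : ∫ x, Real.exp (lam * ψ x) ∂μ ≤ Real.exp (lam ^ 2 / 4) * Mreal := by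
        rw [hMreal_def, ← integral_const_mul]
        refine integral_mono hexp_lam_int (hexp_int.const_mul _) fun x => ?_
        rw [← Real.exp_add]
        refine Real.exp_le_exp.mpr ?_
        nlinarith [sq_nonneg (lam / 2 - ψ x)]
      have h2 : 0 < ∫ x, Real.exp (lam * ψ x) ∂μ := integral_exp_pos hexp_lam_int
      calc Real.log (∫ x, Real.exp (lam * ψ x) ∂μ)
          ≤ Real.log (Real.exp (lam ^ 2 / 4) * Mreal) := Real.log_le_log h2 h1
        _ = lam ^ 2 / 4 + L := by
            rw [Real.log_mul (Real.exp_pos _).ne' (by linarith : Mreal ≠ 0), Real.log_exp,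
              hL_def]
    have hDVlam : lam * ∫ x, ψ x ∂ν ≤ H + (lam ^ 2 / 4 + L) := by
      have h := dv μ ν hνμ h_int (fun x => lam * ψ x) (hψ_int_ν.const_mul lam) hexp_lam_int
      rw [integral_const_mul] at h
      exact h.trans (by linarith [hlog_bound])
    have hDVlam_μ : lam * ∫ x, ψ x ∂μ ≤ lam ^ 2 / 4 + L := by
      have h := dv μ μ Measure.AbsolutelyContinuous.rfl hllr_self_int
        (fun x => lam * ψ x) (hψ_int_μ.const_mul lam) hexp_lam_int
      rw [integral_const_mul, hllr_self] at h
      linarith [hlog_bound]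
    have hS : (∫ x, ψ x ∂ν) + ∫ x, ψ x ∂μ ≤ lam := by
      have hsum : lam * ((∫ x, ψ x ∂ν) + ∫ x, ψ x ∂μ) ≤ lam * lam := by
        have : lam * lam = lam ^ 2 := by ring
        rw [this, mul_add]
        nlinarith [hDVlam, hDVlam_μ, hlam_sq]
      exact le_of_mul_le_mul_left hsum hlam_pos
    have hlam_le : lam ≤ Real.sqrt (2 * (1 + L) * H) := by
      refine Real.sqrt_le_sqrt ?_
      nlinarith [hL0]
    refine hstep1.trans (ENNReal.ofReal_le_ofReal ?_)
    rw [hsum_val]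
    linarith


end BV

/-- **Bolley–Villani inequality** (Theorem 2.1 of Bolley–Villani): for Borel probability
measures `μ, ν` on a Polish space `X` and a nonnegative Borel function `φ`,
`TV_φ(μ, ν) = ∫ φ d|μ - ν| ≤ (1 + log ∫ e^{φ²} dμ)^{1/2} · √(2 H(ν | μ))`. -/


theorem weighted_tv_le_entropy {X : Type*} [MeasurableSpace X] [TopologicalSpace X] [PolishSpace X] [BorelSpace X]
    (μ ν : Measure X) [IsProbabilityMeasure μ] [IsProbabilityMeasure ν]
    (φ : X → ℝ) (hφ_meas : Measurable φ) (hφ_nonneg : ∀ x, 0 ≤ φ x) :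
    ∫⁻ x, ENNReal.ofReal (φ x) ∂(tvMeasure μ ν) ≤
      (1 + elog (∫⁻ x, ENNReal.ofReal (Real.exp (φ x ^ 2)) ∂μ)) ^ (1/2 : ℝ) *
        (2 * relEntropy ν μ) ^ (1/2 : ℝ) := by
  by_cases hc : ν ≪ μ ∧ Integrable (fun x => Real.log (ν.rnDeriv μ x).toReal) ν
  · obtain ⟨hν, hint⟩ := hc
    have hint' : Integrable (llr ν μ) ν := hint
    rw [relEntropy, if_pos ⟨hν, hint⟩]
    set H := ∫ x, Real.log (ν.rnDeriv μ x).toReal ∂ν with hH_def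
    have hH_llr : H = ∫ x, llr ν μ x ∂ν := rfl
    have hH0 : 0 ≤ H := BV.integral_llr_nonneg ν μ hν hint'
    by_cases hMtop : (∫⁻ x, ENNReal.ofReal (Real.exp (φ x ^ 2)) ∂μ) = ∞
    · rw [elog, if_pos hMtop]
      by_cases hH : ENNReal.ofReal H = 0
      · -- entropy is zero: the measures agree, LHS is zero
        have hHzero : H = 0 := le_antisymm (by rwa [ENNReal.ofReal_eq_zero] at hH) hH0
        have hMfin : (∫⁻ x, ENNReal.ofReal (Real.exp ((1:ℝ) ^ 2)) ∂μ) ≠ ∞ := by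
          rw [lintegral_const]
          simp [ENNReal.mul_eq_top]
        have hkey := BV.key μ ν hν hint' (fun _ => (1:ℝ)) measurable_const
          (fun _ => one_pos.le) hMfin
        rw [← hH_llr, hHzero] at hkey
        simp only [mul_zero, Real.sqrt_zero, ENNReal.ofReal_zero, ENNReal.ofReal_one,
          lintegral_one] at hkey
        have htv0 : tvMeasure μ ν = 0 := Measure.measure_univ_eq_zero.mp (le_antisymm hkey (by simp))
        rw [htv0]
        simp
      · -- entropy positive, RHS is infinite
        have h1 : ((1:ℝ≥0∞) + ⊤) ^ (1/2 : ℝ) = ⊤ := by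
          rw [show (1:ℝ≥0∞) + ⊤ = ⊤ from by simp]
          exact ENNReal.top_rpow_of_pos (by norm_num)
        rw [h1, ENNReal.top_mul]
        · exact le_top
        · intro h0
          rw [ENNReal.rpow_eq_zero_iff] at h0
          rcases h0 with ⟨h0, -⟩ | ⟨-, h0⟩
          · rcases mul_eq_zero.mp h0 with h | h
            · norm_num at h
            · exact hH h
          · norm_num at h0
    · rw [elog, if_neg hMtop]
      set Mt := (∫⁻ x, ENNReal.ofReal (Real.exp (φ x ^ 2)) ∂μ).toReal with hMt_def
      have hkey := BV.key μ ν hν hint' φ hφ_meas hφ_nonneg hMtop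
      rw [← hH_llr] at hkey
      refine hkey.trans (le_of_eq ?_)
      have hMt1 : 1 ≤ Mt := by
        have hone : (1:ℝ≥0∞) ≤ ∫⁻ x, ENNReal.ofReal (Real.exp (φ x ^ 2)) ∂μ := by
          calc (1:ℝ≥0∞) = ∫⁻ _, 1 ∂μ := by simp
          _ ≤ _ := by
              refine lintegral_mono fun x => ?_
              rw [show (1:ℝ≥0∞) = ENNReal.ofReal 1 by simp]
              exact ENNReal.ofReal_le_ofReal (Real.one_le_exp (sq_nonneg _))
        calc (1:ℝ) = (1:ℝ≥0∞).toReal := by simp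
        _ ≤ Mt := ENNReal.toReal_mono hMtop hone
      have hL0 : 0 ≤ Real.log Mt := Real.log_nonneg hMt1
      have e1 : (1:ℝ≥0∞) + ENNReal.ofReal (Real.log Mt)
          = ENNReal.ofReal (1 + Real.log Mt) := by
        rw [ENNReal.ofReal_add (by norm_num) hL0, ENNReal.ofReal_one]
      have e2 : (2:ℝ≥0∞) * ENNReal.ofReal H = ENNReal.ofReal (2 * H) := by
        rw [ENNReal.ofReal_mul (by norm_num : (0:ℝ) ≤ 2)]
        norm_num
      rw [e1, e2, BV.ofReal_half_rpow (by linarith), BV.ofReal_half_rpow (by linarith),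
        ← ENNReal.ofReal_mul (Real.sqrt_nonneg _),
        ← Real.sqrt_mul (by linarith) (2 * H)]
      congr 2
      ring
  · rw [relEntropy, if_neg hc]
    have h2top : (2:ℝ≥0∞) * ⊤ = ⊤ := by simp
    rw [h2top, ENNReal.top_rpow_of_pos (by norm_num), ENNReal.mul_top]
    · exact le_top
    · intro h0
      rw [ENNReal.rpow_eq_zero_iff] at h0
      rcases h0 with ⟨h0, -⟩ | ⟨-, h0⟩
      · exact (by simp : (1:ℝ≥0∞) + elog _ ≠ 0) h0
      · norm_num at h0

end
end

section
/- Let X be a Polish space, let μ, ν be Borel probability measures on X, and let φ : X → [0,∞) be Borel measurable. Then the weighted total variation admits the coupling representation TV_φ(μ, ν) := ∫_X φ(x) |μ − ν|(dx) = inf over couplings π of μ and ν of ∫_{X×X} (φ(x) + φ(y)) 1_{x ≠ y} π(dx, dy), and the infimum is attained by any coupling π that equals (id, id)_# (μ ∧ ν) on the diagonal {x = y}. -/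
open MeasureTheory ProbabilityTheory MeasurableSpace
open scoped Classical
open scoped ENNReal

noncomputable section

lemma my_inf_fin {α : Type*} [MeasurableSpace α] (μ ν : Measure α) [IsFiniteMeasure μ] :
    IsFiniteMeasure (μ ⊓ ν) := isFiniteMeasure_of_le μ inf_le_left

lemma my_sub_inf_singular {α : Type*} [MeasurableSpace α] (μ ν : Measure α)
    [IsFiniteMeasure μ] [IsFiniteMeasure ν] :
    (μ - μ ⊓ ν) ⟂ₘ (ν - μ ⊓ ν) := by
  haveI : IsFiniteMeasure (μ ⊓ ν) := my_inf_fin μ ν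
  have hdμ : μ - μ ⊓ ν + μ ⊓ ν = μ := Measure.sub_add_cancel_of_le inf_le_left
  have heν : ν - μ ⊓ ν + μ ⊓ ν = ν := Measure.sub_add_cancel_of_le inf_le_right
  have h0 : (μ - μ ⊓ ν) ⊓ (ν - μ ⊓ ν) = 0 := by
    have h1 : μ ⊓ ν + (μ - μ ⊓ ν) ⊓ (ν - μ ⊓ ν) ≤ μ ⊓ ν := by
      refine le_inf ?_ ?_
      · calc μ ⊓ ν + (μ - μ ⊓ ν) ⊓ (ν - μ ⊓ ν) ≤ μ ⊓ ν + (μ - μ ⊓ ν) :=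
              add_le_add_right inf_le_left _
          _ = μ := by rw [add_comm]; exact hdμ
      · calc μ ⊓ ν + (μ - μ ⊓ ν) ⊓ (ν - μ ⊓ ν) ≤ μ ⊓ ν + (ν - μ ⊓ ν) :=
              add_le_add_right inf_le_right _
          _ = ν := by rw [add_comm]; exact heν
    have h2 := Measure.le_iff'.1 h1 Set.univ
    rw [Measure.add_apply] at h2
    have h3 : ((μ - μ ⊓ ν) ⊓ (ν - μ ⊓ ν)) Set.univ = 0 := by
      have h4 : (μ ⊓ ν) Set.univ + ((μ - μ ⊓ ν) ⊓ (ν - μ ⊓ ν)) Set.univ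
          ≤ (μ ⊓ ν) Set.univ + 0 := by rw [add_zero]; exact h2
      exact le_zero_iff.1
        ((ENNReal.add_le_add_iff_left (measure_ne_top (μ ⊓ ν) Set.univ)).1 h4)
    exact Measure.measure_univ_eq_zero.1 h3
  refine Measure.mutuallySingular_of_disjoint (disjoint_iff.mpr ?_)
  rw [h0]; rfl

lemma my_tv_eq {α : Type*} [MeasurableSpace α] (μ ν : Measure α)
    [IsFiniteMeasure μ] [IsFiniteMeasure ν] :
    tvMeasure μ ν = (μ - μ ⊓ ν) + (ν - μ ⊓ ν) := by
  haveI : IsFiniteMeasure (μ ⊓ ν) := my_inf_fin μ ν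
  haveI : IsFiniteMeasure (μ - μ ⊓ ν) := isFiniteMeasure_of_le μ Measure.sub_le
  haveI : IsFiniteMeasure (ν - μ ⊓ ν) := isFiniteMeasure_of_le ν Measure.sub_le
  have hdμ : μ - μ ⊓ ν + μ ⊓ ν = μ := Measure.sub_add_cancel_of_le inf_le_left
  have heν : ν - μ ⊓ ν + μ ⊓ ν = ν := Measure.sub_add_cancel_of_le inf_le_right
  have hde : (μ - μ ⊓ ν) ⟂ₘ (ν - μ ⊓ ν) := my_sub_inf_singular μ ν
  set j : JordanDecomposition α := ⟨μ - μ ⊓ ν, ν - μ ⊓ ν, hde⟩ with hjdef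
  have hj : μ.toSignedMeasure - ν.toSignedMeasure = j.toSignedMeasure := by
    show μ.toSignedMeasure - ν.toSignedMeasure
        = (μ - μ ⊓ ν).toSignedMeasure - (ν - μ ⊓ ν).toSignedMeasure
    ext1 i hi
    have hμi : μ i = (μ - μ ⊓ ν) i + (μ ⊓ ν) i := by
      conv_lhs => rw [← hdμ]
      exact Measure.add_apply _ _ _
    have hνi : ν i = (ν - μ ⊓ ν) i + (μ ⊓ ν) i := by
      conv_lhs => rw [← heν]
      exact Measure.add_apply _ _ _
    rw [Measure.toSignedMeasure_sub_apply hi, Measure.toSignedMeasure_sub_apply hi]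
    simp only [Measure.real]
    rw [hμi, hνi, ENNReal.toReal_add (measure_ne_top _ i) (measure_ne_top _ i),
      ENNReal.toReal_add (measure_ne_top _ i) (measure_ne_top _ i)]
    ring
  rw [tvMeasure, SignedMeasure.totalVariation, SignedMeasure.toJordanDecomposition_eq hj]

/-- The weighted total variation admits the coupling representation
`TV_φ(μ, ν) = inf_{π ∈ Cpl(μ,ν)} ∫ (φ(x) + φ(y)) 1_{x ≠ y} dπ`, and the infimum is
attained by any coupling which coincides with `(id, id)_#(μ ∧ ν)` on the diagonal. -/
theorem weighted_tv_coupling_repr {X : Type*} [MeasurableSpace X] [TopologicalSpace X] [PolishSpace X] [BorelSpace X]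
    (μ ν : Measure X) [IsProbabilityMeasure μ] [IsProbabilityMeasure ν]
    (φ : X → ℝ) (hφ_meas : Measurable φ) (hφ_nonneg : ∀ x, 0 ≤ φ x) :
    (∫⁻ x, ENNReal.ofReal (φ x) ∂(tvMeasure μ ν) =
      ⨅ (π : Measure (X × X)) (_ : IsCoupling μ ν π),
        ∫⁻ q in {q : X × X | q.1 ≠ q.2},
          (ENNReal.ofReal (φ q.1) + ENNReal.ofReal (φ q.2)) ∂π) ∧
    (∀ π : Measure (X × X), IsCoupling μ ν π →
      π.restrict {q : X × X | q.1 = q.2} = (μ ⊓ ν).map (fun x => (x, x)) →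
      ∫⁻ q in {q : X × X | q.1 ≠ q.2},
          (ENNReal.ofReal (φ q.1) + ENNReal.ofReal (φ q.2)) ∂π =
        ∫⁻ x, ENNReal.ofReal (φ x) ∂(tvMeasure μ ν)) := by
  classical
  set f : X → ℝ≥0∞ := fun x => ENNReal.ofReal (φ x) with hfdef
  have hfm : Measurable f := ENNReal.measurable_ofReal.comp hφ_meas
  set D : Set (X × X) := {q : X × X | q.1 = q.2} with hDdef
  have hD : MeasurableSet D := by
    have : IsClosed D := isClosed_eq continuous_fst continuous_snd
    exact this.measurableSet
  have hDc : {q : X × X | q.1 ≠ q.2} = Dᶜ := rfl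
  have hdiag : Measurable (fun x : X => (x, x)) := measurable_id.prodMk measurable_id
  set m : Measure X := μ ⊓ ν with hmdef
  haveI : IsFiniteMeasure m := my_inf_fin μ ν
  set d : Measure X := μ - m with hddef
  set e : Measure X := ν - m with hedef
  haveI : IsFiniteMeasure d := isFiniteMeasure_of_le μ Measure.sub_le
  haveI : IsFiniteMeasure e := isFiniteMeasure_of_le ν Measure.sub_le
  have hdμ : d + m = μ := Measure.sub_add_cancel_of_le inf_le_left
  have heν : e + m = ν := Measure.sub_add_cancel_of_le inf_le_right
  have htv : tvMeasure μ ν = d + e := my_tv_eq μ ν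
  -- pushforwards of measures supported on the diagonal restrict to themselves
  have hdiagres : ∀ ρ : Measure X, (ρ.map (fun x => (x, x))).restrict D
      = ρ.map (fun x => (x, x)) := by
    intro ρ
    refine Measure.restrict_eq_self_of_ae_mem (ae_iff.2 ?_)
    have : {q : X × X | ¬ q ∈ D} = Dᶜ := rfl
    rw [this, Measure.map_apply hdiag hD.compl]
    convert measure_empty (μ := ρ)
    ext x
    simp [hDdef]
  -- splitting the integral
  have hsplit : ∀ π : Measure (X × X),
      ∫⁻ q in {q : X × X | q.1 ≠ q.2}, (f q.1 + f q.2) ∂π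
        = ∫⁻ x, f x ∂((π.restrict Dᶜ).map Prod.fst)
          + ∫⁻ x, f x ∂((π.restrict Dᶜ).map Prod.snd) := by
    intro π
    rw [hDc, lintegral_map hfm measurable_fst, lintegral_map hfm measurable_snd]
    exact lintegral_add_left (hfm.comp measurable_fst) _
  -- marginal decomposition for couplings
  have hmarg : ∀ π : Measure (X × X), IsCoupling μ ν π →
      (π.restrict D).map Prod.fst + (π.restrict Dᶜ).map Prod.fst = μ
      ∧ (π.restrict D).map Prod.snd + (π.restrict Dᶜ).map Prod.snd = ν
      ∧ (π.restrict D).map Prod.fst = (π.restrict D).map Prod.snd := by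
    intro π hπ
    have h1 : π.restrict D + π.restrict Dᶜ = π := Measure.restrict_add_restrict_compl hD
    refine ⟨?_, ?_, ?_⟩
    · rw [← Measure.map_add _ _ measurable_fst, h1, hπ.1]
    · rw [← Measure.map_add _ _ measurable_snd, h1, hπ.2]
    · refine Measure.map_congr ?_
      filter_upwards [ae_restrict_mem hD] with q hq
      exact hq
  -- Part 2
  have part2 : ∀ π : Measure (X × X), IsCoupling μ ν π →
      π.restrict D = m.map (fun x => (x, x)) →
      ∫⁻ q in {q : X × X | q.1 ≠ q.2}, (f q.1 + f q.2) ∂π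
        = ∫⁻ x, f x ∂(tvMeasure μ ν) := by
    intro π hπ hres
    obtain ⟨h1, h2, _⟩ := hmarg π hπ
    have hfst : (π.restrict D).map Prod.fst = m := by
      rw [hres, Measure.map_map measurable_fst hdiag]
      exact Measure.map_id
    have hsnd : (π.restrict D).map Prod.snd = m := by
      rw [hres, Measure.map_map measurable_snd hdiag]
      exact Measure.map_id
    have ha : (π.restrict Dᶜ).map Prod.fst = d := by
      have hh : (π.restrict Dᶜ).map Prod.fst + m = d + m := by
        calc (π.restrict Dᶜ).map Prod.fst + m
            = m + (π.restrict Dᶜ).map Prod.fst := add_comm _ _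
          _ = (π.restrict D).map Prod.fst + (π.restrict Dᶜ).map Prod.fst := by rw [hfst]
          _ = μ := h1
          _ = d + m := hdμ.symm
      calc (π.restrict Dᶜ).map Prod.fst
          = (π.restrict Dᶜ).map Prod.fst + m - m := (Measure.add_sub_cancel).symm
        _ = d + m - m := by rw [hh]
        _ = d := Measure.add_sub_cancel
    have hb : (π.restrict Dᶜ).map Prod.snd = e := by
      have hh : (π.restrict Dᶜ).map Prod.snd + m = e + m := by
        calc (π.restrict Dᶜ).map Prod.snd + m
            = m + (π.restrict Dᶜ).map Prod.snd := add_comm _ _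
          _ = (π.restrict D).map Prod.snd + (π.restrict Dᶜ).map Prod.snd := by rw [hsnd]
          _ = ν := h2
          _ = e + m := heν.symm
      calc (π.restrict Dᶜ).map Prod.snd
          = (π.restrict Dᶜ).map Prod.snd + m - m := (Measure.add_sub_cancel).symm
        _ = e + m - m := by rw [hh]
        _ = e := Measure.add_sub_cancel
    rw [hsplit π, ha, hb, htv, lintegral_add_measure]
  refine ⟨le_antisymm ?_ ?_, part2⟩
  -- lower bound
  · refine le_iInf fun π => le_iInf fun hπ => ?_
    obtain ⟨h1, h2, h3⟩ := hmarg π hπ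
    have hρm : (π.restrict D).map Prod.fst ≤ m := by
      refine le_inf (h1 ▸ Measure.le_add_right le_rfl) ?_
      rw [h3]; exact h2 ▸ Measure.le_add_right le_rfl
    have hda : d ≤ (π.restrict Dᶜ).map Prod.fst := by
      refine Measure.sub_le_of_le_add ?_
      calc μ = (π.restrict D).map Prod.fst + (π.restrict Dᶜ).map Prod.fst := h1.symm
        _ ≤ m + (π.restrict Dᶜ).map Prod.fst := add_le_add_left hρm _
        _ = (π.restrict Dᶜ).map Prod.fst + m := add_comm _ _
    have heb : e ≤ (π.restrict Dᶜ).map Prod.snd := by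
      refine Measure.sub_le_of_le_add ?_
      calc ν = (π.restrict D).map Prod.snd + (π.restrict Dᶜ).map Prod.snd := h2.symm
        _ ≤ m + (π.restrict Dᶜ).map Prod.snd := add_le_add_left (h3 ▸ hρm) _
        _ = (π.restrict Dᶜ).map Prod.snd + m := add_comm _ _
    rw [hsplit π, htv, lintegral_add_measure]
    exact add_le_add (lintegral_mono' hda le_rfl) (lintegral_mono' heb le_rfl)
  -- upper bound: construct an optimal coupling
  · have hmuniv : d Set.univ + m Set.univ = 1 := by
      have := congrArg (fun ρ : Measure X => ρ Set.univ) hdμ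
      simpa using this
    have hnuniv : e Set.univ + m Set.univ = 1 := by
      have := congrArg (fun ρ : Measure X => ρ Set.univ) heν
      simpa using this
    have hke : e Set.univ = d Set.univ := by
      refine (ENNReal.add_left_inj (measure_ne_top m Set.univ)).1 ?_
      rw [hmuniv, hnuniv]
    by_cases hk : d Set.univ = 0
    · -- case μ = ν
      have hd0 : d = 0 := Measure.measure_univ_eq_zero.1 hk
      have he0 : e = 0 := Measure.measure_univ_eq_zero.1 (hke.trans hk)
      have hmμ : m = μ := by rw [← hdμ, hd0, zero_add]
      have hmν : m = ν := by rw [← heν, he0, zero_add]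
      set π₀ : Measure (X × X) := m.map (fun x => (x, x)) with hπ₀
      have hcoup : IsCoupling μ ν π₀ := by
        constructor
        · rw [hπ₀, Measure.map_map measurable_fst hdiag]
          rw [show (Prod.fst ∘ fun x : X => (x, x)) = id from rfl, Measure.map_id, hmμ]
        · rw [hπ₀, Measure.map_map measurable_snd hdiag]
          rw [show (Prod.snd ∘ fun x : X => (x, x)) = id from rfl, Measure.map_id, hmν]
      have hres : π₀.restrict D = m.map (fun x => (x, x)) := hdiagres m
      exact (iInf₂_le π₀ hcoup).trans_eq (part2 π₀ hcoup hres)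
    · have hktop : d Set.univ ≠ ∞ := measure_ne_top d _
      set π₀ : Measure (X × X) :=
        m.map (fun x => (x, x)) + (d Set.univ)⁻¹ • d.prod e with hπ₀
      have hcoup : IsCoupling μ ν π₀ := by
        constructor
        · rw [hπ₀, Measure.map_add _ _ measurable_fst, Measure.map_smul,
            Measure.map_fst_prod, Measure.map_map measurable_fst hdiag,
            show (Prod.fst ∘ fun x : X => (x, x)) = id from rfl, Measure.map_id,
            hke, smul_smul, ENNReal.inv_mul_cancel hk hktop, one_smul, ← hdμ, add_comm]
        · rw [hπ₀, Measure.map_add _ _ measurable_snd, Measure.map_smul,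
            Measure.map_snd_prod, Measure.map_map measurable_snd hdiag,
            show (Prod.snd ∘ fun x : X => (x, x)) = id from rfl, Measure.map_id,
            smul_smul, ENNReal.inv_mul_cancel hk hktop, one_smul, ← heν, add_comm]
      have hprodD : (d.prod e) D = 0 := by
        obtain ⟨u, hu, hdu, heu⟩ := my_sub_inf_singular μ ν
        have hsub : D ⊆ (u ×ˢ Set.univ) ∪ (Set.univ ×ˢ uᶜ) := by
          rintro ⟨x, y⟩ hxy
          have hxy' : x = y := hxy
          by_cases hxu : x ∈ u
          · exact Or.inl ⟨hxu, trivial⟩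
          · exact Or.inr ⟨trivial, by rwa [← hxy']⟩
        refine le_antisymm ?_ zero_le
        calc (d.prod e) D ≤ (d.prod e) ((u ×ˢ Set.univ) ∪ (Set.univ ×ˢ uᶜ)) :=
              measure_mono hsub
          _ ≤ (d.prod e) (u ×ˢ Set.univ) + (d.prod e) (Set.univ ×ˢ uᶜ) := measure_union_le _ _
          _ = d u * e Set.univ + d Set.univ * e uᶜ := by rw [Measure.prod_prod,
              Measure.prod_prod]
          _ = 0 := by rw [hdu, heu, zero_mul, mul_zero, add_zero]
      have hres : π₀.restrict D = m.map (fun x => (x, x)) := by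
        rw [hπ₀, Measure.restrict_add, hdiagres m, Measure.restrict_smul,
          Measure.restrict_eq_zero.2 hprodD, smul_zero, add_zero]
      exact (iInf₂_le π₀ hcoup).trans_eq (part2 π₀ hcoup hres)

end
end
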